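/- arXiv:2108.13745 — 3 statements merged into one kernel-verified Lean document; each statement's English description precedes it below -/
import Mathlib

section
/- Let M be a (possibly infinite) matroid on ground set E. There exists a finitary matroid M^fin on the same ground set E whose circuits are exactly the finite circuits of M; moreover, the identity map on E is a strong map from M^fin to M, i.e., cl_{M^fin}(A) ⊆ cl_M(A) for every A ⊆ E. -/
/-- A circuit of a (possibly infinite) matroid is a minimal dependent set. -/
def Matroid.Circuit' {α : Type*} (M : Matroid α) (C : Set α) : Prop := Minimal M.Dep C

/-- For every (possibly infinite) matroid `M`, there is a finitary
matroid `M^fin` on the same ground set whose circuits are exactly the finite circuits of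
`M`; moreover the identity map is a strong map `M^fin → M`, i.e.
`M^fin.closure A ⊆ M.closure A` for every `A ⊆ M.E`. -/
theorem exists_finitization {α : Type*} (M : Matroid α) :
    ∃ N : Matroid α, N.E = M.E ∧ N.Finitary ∧
      (∀ C, N.Circuit' C ↔ (M.Circuit' C ∧ C.Finite)) ∧
      ∀ A ⊆ M.E, N.closure A ⊆ M.closure A := by
  classical
  set Ind : Set α → Prop := fun I => I ⊆ M.E ∧ ∀ J ⊆ I, J.Finite → M.Indep J with hInd
  have hsub : ∀ ⦃I J : Set α⦄, Ind J → I ⊆ J → Ind I := by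
    rintro I J ⟨hJE, hJ⟩ hIJ
    exact ⟨hIJ.trans hJE, fun K hK hKfin => hJ K (hK.trans hIJ) hKfin⟩
  have hfin_ind : ∀ ⦃I : Set α⦄, Ind I → I.Finite → M.Indep I := fun I hI hfin =>
    hI.2 I subset_rfl hfin
  have hMind : ∀ ⦃I : Set α⦄, M.Indep I → Ind I := by
    intro I hI
    exact ⟨hI.subset_ground, fun J hJ _ => hI.subset hJ⟩
  set NI : IndepMatroid α := IndepMatroid.ofFinitaryCardAugment M.E Ind
    ⟨Set.empty_subset _, fun J hJ _ => M.empty_indep.subset hJ⟩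
    hsub
    (by
      intro I J hI hIfin hJ hJfin hlt
      have hMI : M.Indep I := hfin_ind hI hIfin
      have hMJ : M.Indep J := hfin_ind hJ hJfin
      have hlt' : I.encard < J.encard := by
        rw [← hIfin.cast_ncard_eq, ← hJfin.cast_ncard_eq]
        exact_mod_cast hlt
      obtain ⟨e, he, hins⟩ := hMI.augment hMJ hlt'
      exact ⟨e, he.1, he.2, hMind hins⟩)
    (fun I h => ⟨fun e he => (h {e} (Set.singleton_subset_iff.2 he) (Set.finite_singleton e)).1
        rfl, fun J hJ hJfin => (h J hJ hJfin).2 J subset_rfl hJfin⟩)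
    (fun I hI => hI.1)
    with hNI
  refine ⟨NI.matroid, by simp [hNI], by rw [hNI]; infer_instance, ?_, ?_⟩
  · -- circuits
    have hNdep : ∀ C : Set α, NI.matroid.Dep C ↔ (C ⊆ M.E ∧ ∃ J ⊆ C, J.Finite ∧ M.Dep J) := by
      intro C
      rw [Matroid.Dep]
      simp only [hNI, IndepMatroid.matroid_indep_iff, IndepMatroid.ofFinitaryCardAugment_indep,
        IndepMatroid.matroid_E, IndepMatroid.ofFinitaryCardAugment_E]
      constructor
      · rintro ⟨hni, hCE⟩
        refine ⟨hCE, ?_⟩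
        simp only [hInd, not_and, not_forall, exists_prop] at hni
        obtain ⟨J, hJC, hJfin, hJni⟩ := hni hCE
        exact ⟨J, hJC, hJfin, ⟨hJni, hJC.trans hCE⟩⟩
      · rintro ⟨hCE, J, hJC, hJfin, hJdep⟩
        exact ⟨fun h => hJdep.not_indep (h.2 J hJC hJfin), hCE⟩
    intro C
    constructor
    · rintro ⟨hCdep, hCmin⟩
      obtain ⟨hCE, J, hJC, hJfin, hJdep⟩ := (hNdep C).1 hCdep
      have hJNdep : NI.matroid.Dep J := (hNdep J).2 ⟨hJdep.subset_ground, J, subset_rfl,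
        hJfin, hJdep⟩
      have hCJ : C ⊆ J := hCmin hJNdep hJC
      have hCeq : C = J := hCJ.antisymm hJC
      subst hCeq
      refine ⟨⟨hJdep, ?_⟩, hJfin⟩
      intro D hDdep hDC
      exact hCmin ((hNdep D).2 ⟨hDdep.subset_ground, D, subset_rfl, hJfin.subset hDC,
        hDdep⟩) hDC
    · rintro ⟨⟨hCdep, hCmin⟩, hCfin⟩
      refine ⟨(hNdep C).2 ⟨hCdep.subset_ground, C, subset_rfl, hCfin, hCdep⟩, ?_⟩
      intro D hDdep hDC
      obtain ⟨hDE, J, hJD, hJfin, hJdep⟩ := (hNdep D).1 hDdep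
      exact (hCmin hJdep (hJD.trans hDC)).trans hJD
  · -- closure
    intro A hAE e he
    have heE : e ∈ M.E := by
      have := NI.matroid.closure_subset_ground A
      simpa [hNI] using this he
    by_cases heA : e ∈ A
    · exact M.subset_closure A hAE heA
    · obtain ⟨J, hJ⟩ := NI.matroid.exists_isBasis A (by simpa [hNI] using hAE)
      rw [← hJ.closure_eq_closure] at he
      have heJ : e ∉ J := fun h => heA (hJ.subset h)
      have hJind : NI.matroid.Indep J := hJ.indep
      have hdep : NI.matroid.Dep (insert e J) :=
        (hJind.insert_dep_iff).2 ⟨he, heJ⟩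
      have hJInd : Ind J := by
        have := hJind
        simpa [hNI, IndepMatroid.ofFinitaryCardAugment_indep] using this
      -- get a finite dependent subset of insert e J
      have : ∃ F ⊆ insert e J, F.Finite ∧ M.Dep F := by
        have h := hdep
        rw [Matroid.Dep] at h
        obtain ⟨hni, hssE⟩ := h
        simp only [hNI, IndepMatroid.matroid_indep_iff, IndepMatroid.ofFinitaryCardAugment_indep,
          IndepMatroid.matroid_E, IndepMatroid.ofFinitaryCardAugment_E] at hni hssE
        simp only [hInd, not_and, not_forall, exists_prop] at hni
        obtain ⟨F, hF, hFfin, hFni⟩ := hni hssE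
        exact ⟨F, hF, hFfin, ⟨hFni, hF.trans hssE⟩⟩
      obtain ⟨F, hFss, hFfin, hFdep⟩ := this
      have heF : e ∈ F := by
        by_contra heF
        have hFJ : F ⊆ J := fun x hx => ((hFss hx).resolve_left (fun h => heF (h ▸ hx)))
        exact hFdep.not_indep (hJInd.2 F hFJ hFfin)
      set F₀ := F \ {e} with hF₀
      have hF₀J : F₀ ⊆ J := by
        intro x hx
        rcases hFss hx.1 with h | h
        · exact absurd h hx.2
        · exact h
      have hF₀ind : M.Indep F₀ := hJInd.2 F₀ hF₀J (hFfin.subset Set.diff_subset)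
      have hFins : F = insert e F₀ := by
        rw [hF₀, Set.insert_diff_singleton, Set.insert_eq_self.2 heF]
      have : M.Dep (insert e F₀) := hFins ▸ hFdep
      have heclF₀ : e ∈ M.closure F₀ := ((hF₀ind.insert_dep_iff).1 this).1
      exact M.closure_subset_closure (hF₀J.trans hJ.subset) heclF₀
end

section
/- Let M and N be (possibly infinite) matroids and let f : E(M) → E(N) be a strong map, i.e., f(cl_M(A)) ⊆ cl_N(f(A)) for all A ⊆ E(M). Let M^fin and N^fin be the finitary matroids on E(M) and E(N) whose circuits are exactly the finite circuits of M and of N, respectively. Then f is also a strong map from M^fin to N^fin; that is, f(cl_{M^fin}(A)) ⊆ cl_{N^fin}(f(A)) for all A ⊆ E(M). -/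
/-- A finite dependent set contains a circuit. -/
lemma exists_circuit'_subset_of_finite_dep {α : Type*} {M : Matroid α} {D : Set α}
    (hD : M.Dep D) (hfin : D.Finite) : ∃ C ⊆ D, M.Circuit' C ∧ C.Finite := by
  have hs : {C : Set α | C ⊆ D ∧ M.Dep C}.Finite :=
    hfin.finite_subsets.subset fun C hC => hC.1
  obtain ⟨C, hCD, hC⟩ := Set.Finite.exists_le_minimal hs (a := D) ⟨subset_rfl, hD⟩
  refine ⟨C, hCD, ⟨hC.prop.2, fun C' hC' hC'C => ?_⟩, hfin.subset hCD⟩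
  exact hC.le_of_le ⟨hC'C.trans hCD, hC'⟩ hC'C

/-- In a finitary matroid, a dependent set contains a finite circuit. -/
lemma exists_circuit'_subset_of_dep {α : Type*} {M : Matroid α} [M.Finitary] {D : Set α}
    (hD : M.Dep D) : ∃ C ⊆ D, M.Circuit' C ∧ C.Finite := by
  by_contra h
  push_neg at h
  have : M.Indep D := by
    apply Matroid.indep_of_forall_finite_subset_indep
    intro F hFD hF
    by_contra hFind
    have hFdep : M.Dep F := ⟨hFind, hFD.trans hD.subset_ground⟩
    obtain ⟨C, hCF, hC, hCfin⟩ := exists_circuit'_subset_of_finite_dep hFdep hF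
    exact (h C (hCF.trans hFD) hC) hCfin
  exact hD.not_indep this

/-- A proper subset of a circuit is independent. -/
lemma circuit'_ssubset_indep {α : Type*} {M : Matroid α} {C S : Set α}
    (hC : M.Circuit' C) (hS : S ⊂ C) : M.Indep S := by
  by_contra hSind
  have hSdep : M.Dep S := ⟨hSind, hS.subset.trans hC.prop.subset_ground⟩
  exact hS.ne (hS.subset.antisymm (hC.le_of_le hSdep hS.subset))

/-- If `f` is a strong map `M → N`, and `M^fin`, `N^fin` are the finitary
matroids whose circuits are exactly the finite circuits of `M` and of `N`, then `f` is also
a strong map `M^fin → N^fin`. -/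
theorem strong_map_finitization {α β : Type*} (M : Matroid α) (N : Matroid β)
    (f : α → β) (hf : Set.MapsTo f M.E N.E)
    (hstrong : ∀ A ⊆ M.E, f '' M.closure A ⊆ N.closure (f '' A))
    (Mfin : Matroid α) (hME : Mfin.E = M.E) (hMfin : Mfin.Finitary)
    (hMC : ∀ C, Mfin.Circuit' C ↔ (M.Circuit' C ∧ C.Finite))
    (Nfin : Matroid β) (hNE : Nfin.E = N.E) (hNfin : Nfin.Finitary)
    (hNC : ∀ C, Nfin.Circuit' C ↔ (N.Circuit' C ∧ C.Finite)) :
    ∀ A ⊆ M.E, f '' Mfin.closure A ⊆ Nfin.closure (f '' A) := by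
  -- N-independent sets are Nfin-independent
  have hNindep : ∀ J : Set β, N.Indep J → Nfin.Indep J := by
    intro J hJ
    by_contra hJind
    have hJdep : Nfin.Dep J := ⟨hJind, hNE ▸ hJ.subset_ground⟩
    obtain ⟨C, hCJ, hC, -⟩ := exists_circuit'_subset_of_dep hJdep
    exact ((hNC C).mp hC).1.prop.not_indep (hJ.subset hCJ)
  -- For finite sets, N-closure is contained in Nfin-closure
  have hclos : ∀ S : Set β, S.Finite → S ⊆ N.E → N.closure S ⊆ Nfin.closure S := by
    intro S hSfin hSE y hy
    obtain ⟨J, hJ⟩ := N.exists_isBasis' S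
    by_cases hyJ : y ∈ J
    · exact Nfin.mem_closure_of_mem' (hJ.subset hyJ)
        (hNE ▸ (N.closure_subset_ground S) hy)
    · have hyclJ : y ∈ N.closure J := hJ.closure_eq_closure ▸ hy
      have hins : N.Dep (insert y J) := hJ.indep.insert_dep_iff.mpr ⟨hyclJ, hyJ⟩
      obtain ⟨C, hCins, hC, hCfin⟩ := exists_circuit'_subset_of_finite_dep hins
        ((hSfin.subset hJ.subset).insert y)
      have hyC : y ∈ C := by
        by_contra hyC
        exact hC.prop.not_indep (hJ.indep.subset fun z hz =>
          ((hCins hz).resolve_left (by rintro rfl; exact hyC hz)))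
      have hCfinC : Nfin.Circuit' C := (hNC C).mpr ⟨hC, hCfin⟩
      have hCd : Nfin.Indep (C \ {y}) :=
        hNindep _ (circuit'_ssubset_indep hC (Set.sdiff_singleton_ssubset.mpr hyC))
      have : y ∈ Nfin.closure (C \ {y}) := by
        rw [hCd.mem_closure_iff]
        left
        rw [Set.insert_diff_singleton, Set.insert_eq_of_mem hyC]
        exact hCfinC.prop
      refine (Nfin.closure_subset_closure ?_) this
      intro z hz
      exact hJ.subset ((hCins hz.1).resolve_left hz.2)
  -- Main argument
  intro A hAE y hy
  obtain ⟨x, hx, rfl⟩ := hy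
  obtain ⟨I, hI⟩ := Mfin.exists_isBasis' A
  have hxE : x ∈ M.E := hME ▸ Mfin.closure_subset_ground A hx
  by_cases hxI : x ∈ I
  · exact Nfin.mem_closure_of_mem' ⟨x, hI.subset hxI, rfl⟩ (hNE ▸ hf hxE)
  · have hxclI : x ∈ Mfin.closure I := hI.closure_eq_closure ▸ hx
    have hins : Mfin.Dep (insert x I) := hI.indep.insert_dep_iff.mpr ⟨hxclI, hxI⟩
    obtain ⟨C, hCins, hC, hCfin⟩ := exists_circuit'_subset_of_dep hins
    have hxC : x ∈ C := by
      by_contra hxC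
      exact hC.prop.not_indep (hI.indep.subset fun z hz =>
        ((hCins hz).resolve_left (by rintro rfl; exact hxC hz)))
    obtain ⟨hCM, -⟩ := (hMC C).mp hC
    have hCd : M.Indep (C \ {x}) :=
      circuit'_ssubset_indep hCM (Set.sdiff_singleton_ssubset.mpr hxC)
    have hxcl : x ∈ M.closure (C \ {x}) := by
      rw [hCd.mem_closure_iff]
      left
      rw [Set.insert_diff_singleton, Set.insert_eq_of_mem hxC]
      exact hCM.prop
    have hsub : C \ {x} ⊆ A := fun z hz =>
      hI.subset ((hCins hz.1).resolve_left hz.2)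
    have h1 : f x ∈ N.closure (f '' (C \ {x})) :=
      hstrong (C \ {x}) (hCd.subset_ground) ⟨x, hxcl, rfl⟩
    have h2 : f x ∈ Nfin.closure (f '' (C \ {x})) :=
      hclos _ ((hCfin.subset Set.diff_subset).image f)
        (fun z ⟨w, hw, hwz⟩ => hwz ▸ hf (hCd.subset_ground hw)) h1
    exact Nfin.closure_subset_closure (Set.image_mono hsub) h2
end

section
/- Let G be an additive commutative group and let f be a function assigning to each (possibly infinite) matroid on subsets of a fixed type an element of G, such that (i) f is invariant under matroid isomorphism, and (ii) f(M) = f(M \ e) + f(M / e) whenever e is an element of M that is neither a loop nor a coloop. Let E be an infinite set, let r ≥ 0 be an integer, and let U_r(E) be the finitary matroid on E whose circuits are exactly the subsets of E of cardinality r + 1. Then f(U_r(E)) = 0. -/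
open scoped Matroid

/-- `N` is the contraction `M / S`: the matroid on ground set `M.E \ S` whose circuits are
the nonempty, inclusion-wise minimal sets of the form `C \ S` with `C` a circuit of `M`. -/
def Matroid.IsContractionBy {α : Type*} (M : Matroid α) (S : Set α) (N : Matroid α) : Prop :=
  N.E = M.E \ S ∧
  ∀ C, N.Circuit' C ↔ Minimal (fun D => D.Nonempty ∧ ∃ C₀, M.Circuit' C₀ ∧ D = C₀ \ S) C

namespace TGaux

open Set Cardinal

variable {α : Type*}

/-- The finitary uniform matroid of rank `k` on `E`. -/
noncomputable def unif (E : Set α) (k : ℕ) : Matroid α :=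
  (IndepMatroid.ofBddAugment E (fun I => I ⊆ E ∧ I.encard ≤ k)
    ⟨empty_subset _, by simp⟩
    (fun I J hJ hIJ => ⟨hIJ.trans hJ.1, (encard_mono hIJ).trans hJ.2⟩)
    (fun I J hI hJ hIJ => by
      obtain ⟨e, heJ, heI⟩ := not_subset.1 (fun hss => hIJ.not_ge (encard_mono hss))
      refine ⟨e, heJ, heI, insert_subset (hJ.1 heJ) hI.1, ?_⟩
      rw [encard_insert_of_notMem heI]
      exact le_trans ((ENat.add_one_le_iff (hI.2.trans_lt (by simp)).ne).2 hIJ) hJ.2)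
    ⟨k, fun I hI => hI.2⟩
    (fun I hI => hI.1)).matroid

@[simp] lemma unif_E (E : Set α) (k : ℕ) : (unif E k).E = E := rfl

@[simp] lemma unif_indep (E : Set α) (k : ℕ) {I : Set α} :
    (unif E k).Indep I ↔ I ⊆ E ∧ I.encard ≤ k := Iff.rfl

lemma unif_dep (E : Set α) (k : ℕ) {D : Set α} :
    (unif E k).Dep D ↔ D ⊆ E ∧ (k : ℕ∞) < D.encard := by
  rw [Matroid.dep_iff, unif_indep, unif_E]
  constructor
  · rintro ⟨h1, h2⟩
    exact ⟨h2, lt_of_not_ge fun hle => h1 ⟨h2, hle⟩⟩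
  · rintro ⟨h1, h2⟩
    exact ⟨fun h => h2.not_ge h.2, h1⟩

lemma unif_circuit (E : Set α) (k : ℕ) {C : Set α} :
    (unif E k).Circuit' C ↔ C ⊆ E ∧ C.encard = (k : ℕ∞) + 1 := by
  constructor
  · rintro ⟨hC, hmin⟩
    rw [unif_dep] at hC
    obtain ⟨C', hC'C, hC'⟩ := exists_subset_encard_eq
      (show (k : ℕ∞) + 1 ≤ C.encard from Order.add_one_le_of_lt hC.2)
    have hdep : (unif E k).Dep C' := (unif_dep E k).2
      ⟨hC'C.trans hC.1, by rw [hC']; exact_mod_cast Nat.lt_succ_self k⟩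
    have := hmin hdep hC'C
    exact ⟨hC.1, by rw [subset_antisymm this hC'C, hC']⟩
  · rintro ⟨hCE, hcard⟩
    refine ⟨(unif_dep E k).2 ⟨hCE, by rw [hcard]; exact_mod_cast Nat.lt_succ_self k⟩, ?_⟩
    intro Y hY hYC
    have h1 : (k : ℕ∞) + 1 ≤ Y.encard := Order.add_one_le_of_lt ((unif_dep E k).1 hY).2
    exact ((finite_of_encard_eq_coe (k := k + 1)
      (by exact_mod_cast hcard)).eq_of_subset_of_encard_le'
      hYC (hcard.le.trans h1)).symm.subset

/-- A finite dependent set contains a circuit. -/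
lemma exists_circuit_subset (M : Matroid α) {D : Set α} (hD : M.Dep D) (hfin : D.Finite) :
    ∃ C ⊆ D, M.Circuit' C := by
  have hS : {X | X ⊆ D ∧ M.Dep X}.Finite :=
    hfin.finite_subsets.subset (fun X hX => hX.1)
  obtain ⟨C, hC, hCmin⟩ := Set.Finite.exists_minimalFor id _ hS ⟨D, subset_rfl, hD⟩
  refine ⟨C, hC.1, hC.2, fun Y hY hYC => ?_⟩
  exact hCmin ⟨hYC.trans hC.1, hY⟩ hYC

/-- A finitary matroid whose circuits are the `(r+1)`-sets of `E` is the uniform matroid. -/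
lemma eq_unif (U : Matroid α) (E : Set α) (r : ℕ) (hUE : U.E = E) (hUfin : U.Finitary)
    (hUC : ∀ C, U.Circuit' C ↔ (C ⊆ E ∧ C.encard = (r : ℕ∞) + 1)) : U = unif E r := by
  refine Matroid.ext_indep (by simp [hUE]) (fun I hIE => ?_)
  rw [hUE] at hIE
  rw [unif_indep]
  constructor
  · intro hI
    refine ⟨hIE, le_of_not_gt fun hlt => ?_⟩
    obtain ⟨C, hCI, hC⟩ := exists_subset_encard_eq (Order.add_one_le_of_lt hlt)
    exact (((hUC C).2 ⟨hCI.trans hIE, hC⟩).prop).not_indep (hI.subset hCI)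
  · rintro ⟨-, hcard⟩
    refine Matroid.indep_of_forall_finite_subset_indep _ (fun J hJI hJfin => ?_)
    by_contra hJ
    have hJdep : U.Dep J := Matroid.dep_of_not_indep hJ (hJI.trans (hIE.trans_eq hUE.symm))
    obtain ⟨C, hCJ, hC⟩ := exists_circuit_subset U hJdep hJfin
    have := ((hUC C).1 hC).2
    have hle : (r : ℕ∞) + 1 ≤ (r : ℕ∞) :=
      this.symm.le.trans ((encard_mono (hCJ.trans hJI)).trans hcard)
    exact absurd hle (by exact_mod_cast Nat.not_succ_le_self r)

lemma map_unif {D E : Set α} {g : α → α} (hg : InjOn g D) (himg : g '' D = E) (k : ℕ) :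
    (unif D k).map g (by rwa [unif_E]) = unif E k := by
  refine Matroid.ext_indep (by rw [Matroid.map_ground, unif_E, unif_E, himg])
    (fun I hIE => ?_)
  rw [Matroid.map_ground, unif_E, himg] at hIE
  rw [Matroid.map_indep_iff, unif_indep]
  constructor
  · rintro ⟨I₀, hI₀, rfl⟩
    rw [unif_indep] at hI₀
    refine ⟨(image_mono hI₀.1).trans himg.le, ?_⟩
    rw [(hg.mono hI₀.1).encard_image]
    exact hI₀.2
  · rintro ⟨h1, h2⟩
    refine ⟨{x | x ∈ D ∧ g x ∈ I}, ?_, ?_⟩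
    · rw [unif_indep]
      refine ⟨fun x hx => hx.1, ?_⟩
      rw [← (hg.mono (fun x hx => hx.1)).encard_image]
      exact (encard_mono (fun y hy => by obtain ⟨x, hx, rfl⟩ := hy; exact hx.2)).trans h2
    · apply subset_antisymm
      · intro y hy
        obtain ⟨x, hxD, rfl⟩ := himg.symm.subset (h1 hy)
        exact ⟨x, ⟨hxD, hy⟩, rfl⟩
      · rintro y ⟨x, hx, rfl⟩
        exact hx.2

lemma exists_good_map {E : Set α} {e : α} (hE : E.Infinite) (he : e ∈ E) :
    ∃ g : α → α, InjOn g (E \ {e}) ∧ g '' (E \ {e}) = E := by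
  classical
  have hinf : (E \ {e}).Infinite := hE.diff (finite_singleton e)
  have hcard : #(E \ {e} : Set α) = #E := by
    have h1 := Cardinal.mk_diff_add_mk (show ({e} : Set α) ⊆ E by simpa)
    rw [Cardinal.mk_singleton] at h1
    rw [← h1, Cardinal.add_one_eq]
    rw [← Cardinal.infinite_iff]
    exact hinf.to_subtype
  obtain ⟨φ⟩ := Cardinal.eq.mp hcard
  refine ⟨fun x => if h : x ∈ E \ {e} then (φ ⟨x, h⟩ : α) else x, ?_, ?_⟩
  · intro x hx y hy hxy
    simp only [dif_pos hx, dif_pos hy] at hxy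
    simpa using φ.injective (Subtype.ext hxy)
  · ext y
    constructor
    · rintro ⟨x, hx, rfl⟩
      simp only [dif_pos hx]
      exact (φ ⟨x, hx⟩).2
    · intro hy
      refine ⟨(φ.symm ⟨y, hy⟩ : α), (φ.symm ⟨y, hy⟩).2, ?_⟩
      simp only [dif_pos (φ.symm ⟨y, hy⟩).2]
      simp

lemma unif_restrict {E : Set α} (D : Set α) (hD : D ⊆ E) (k : ℕ) :
    unif E k ↾ D = unif D k := by
  refine Matroid.ext_indep (by simp) (fun I hIE => ?_)
  rw [Matroid.restrict_indep_iff, unif_indep, unif_indep]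
  constructor
  · rintro ⟨⟨-, h2⟩, h3⟩
    exact ⟨h3, h2⟩
  · rintro ⟨h1, h2⟩
    exact ⟨⟨h1.trans hD, h2⟩, h1⟩

lemma unif_exists_base_not_mem {E : Set α} {e : α} (hE : E.Infinite) (k : ℕ) :
    ∃ B, (unif E k).IsBase B ∧ e ∉ B := by
  have hinf : (E \ {e}).Infinite := hE.diff (finite_singleton e)
  obtain ⟨B, hBsub, hB⟩ := exists_subset_encard_eq
    (show ((k : ℕ∞) ≤ (E \ {e}).encard) by rw [hinf.encard_eq]; exact le_top)
  have hBE : B ⊆ E := hBsub.trans diff_subset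
  refine ⟨B, Matroid.isBase_iff_maximal_indep.2 ⟨(unif_indep E k).2 ⟨hBE, hB.le⟩,
    fun J hJ hBJ => ?_⟩, fun heB => (hBsub heB).2 rfl⟩
  rw [unif_indep] at hJ
  exact (Set.Finite.eq_of_subset_of_encard_le (finite_of_encard_eq_coe hB) hBJ
    (hJ.2.trans hB.symm.le)).symm.subset

lemma unif_not_circuit_singleton {E : Set α} {e : α} (r : ℕ) :
    ¬ (unif E (r + 1)).Circuit' {e} := by
  intro h
  have h2 := ((unif_circuit E (r + 1)).1 h).2
  rw [encard_singleton] at h2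
  have : (1 : ℕ) = r + 1 + 1 := by exact_mod_cast h2
  omega

lemma unif_isContractionBy {E : Set α} {e : α} (he : e ∈ E) (r : ℕ) :
    (unif E (r + 1)).IsContractionBy {e} (unif (E \ {e}) r) := by
  set Q : Set α → Prop :=
    fun D => D.Nonempty ∧ ∃ C₀, (unif E (r + 1)).Circuit' C₀ ∧ D = C₀ \ {e} with hQ
  have hA : ∀ X, Q X → X ⊆ E \ {e} ∧ (r : ℕ∞) + 1 ≤ X.encard := by
    rintro X ⟨hne, C₀, hC₀, rfl⟩
    rw [unif_circuit] at hC₀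
    refine ⟨diff_subset_diff_left hC₀.1, ?_⟩
    by_cases heC : e ∈ C₀
    · have h3 := encard_diff_singleton_add_one heC
      rw [hC₀.2] at h3
      have h4 : (C₀ \ {e}).encard = ((r + 1 : ℕ) : ℕ∞) :=
        ENat.add_left_injective_of_ne_top ENat.one_ne_top h3
      rw [h4]
      push_cast
      exact le_refl _
    · rw [diff_singleton_eq_self heC, hC₀.2]
      push_cast
      exact le_self_add
  have hB : ∀ X, X ⊆ E \ {e} → X.encard = (r : ℕ∞) + 1 → Q X := by
    intro X hXsub hXcard
    have heX : e ∉ X := fun h => (hXsub h).2 rfl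
    refine ⟨by rw [← encard_ne_zero, hXcard]; simp, insert e X, ?_, ?_⟩
    · rw [unif_circuit]
      refine ⟨insert_subset he (hXsub.trans diff_subset), ?_⟩
      rw [encard_insert_of_notMem heX, hXcard]
      push_cast; ring
    · rw [insert_diff_self_of_notMem heX]
  constructor
  · rfl
  · intro C
    rw [unif_circuit]
    constructor
    · rintro ⟨hCsub, hCcard⟩
      refine ⟨hB C hCsub hCcard, fun Y hY hYC => ?_⟩
      have hCfin : C.Finite := finite_of_encard_eq_coe (k := r + 1) (by exact_mod_cast hCcard)
      exact (hCfin.eq_of_subset_of_encard_le' hYC (hCcard.le.trans (hA Y hY).2)).symm.subset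
    · rintro ⟨hQC, hmin⟩
      obtain ⟨hCsub, hCcard⟩ := hA C hQC
      obtain ⟨C', hC'C, hC'⟩ := exists_subset_encard_eq hCcard
      have := hmin (hB C' (hC'C.trans hCsub) hC') hC'C
      rw [subset_antisymm this hC'C]
      exact ⟨(subset_antisymm this hC'C) ▸ hCsub, hC'⟩

end TGaux

/-- Let `G` be an additive commutative group and `f` a `G`-valued
function on matroids on (subsets of) a fixed type `α` such that (i) `f` is invariant under
matroid isomorphism and (ii) `f M = f (M \ e) + f (M / e)` whenever `e ∈ M.E` is neither a
loop nor a coloop.  If `E` is infinite and `U` is the finitary uniform matroid of rank `r`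
on `E` (circuits: the `(r+1)`-element subsets of `E`), then `f U = 0`. -/
theorem tutte_grothendieck_vanishes {α G : Type*} [AddCommGroup G] (f : Matroid α → G)
    (hiso : ∀ (M : Matroid α) (g : α → α) (hg : Set.InjOn g M.E), f (M.map g hg) = f M)
    (hdc : ∀ (M : Matroid α) (e : α), e ∈ M.E →
      ¬ M.Circuit' {e} → (∃ B, M.IsBase B ∧ e ∉ B) →
      ∀ N, M.IsContractionBy {e} N → f M = f (M ↾ (M.E \ {e})) + f N)
    (E : Set α) (hE : E.Infinite) (r : ℕ)
    (U : Matroid α) (hUE : U.E = E) (hUfin : U.Finitary)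
    (hUC : ∀ C, U.Circuit' C ↔ (C ⊆ E ∧ C.encard = (r : ℕ∞) + 1)) :
    f U = 0 := by
  classical
  obtain ⟨e, he⟩ := hE.nonempty
  set D : Set α := E \ {e} with hD
  obtain ⟨g, hg, himg⟩ := TGaux.exists_good_map hE he
  have hmap : ∀ k : ℕ, f (TGaux.unif E k) = f (TGaux.unif D k) := by
    intro k
    rw [← TGaux.map_unif hg himg k]
    exact hiso (TGaux.unif D k) g (by rwa [TGaux.unif_E])
  have hdc' := hdc (TGaux.unif E (r + 1)) e (by rwa [TGaux.unif_E])
    (TGaux.unif_not_circuit_singleton r) (TGaux.unif_exists_base_not_mem hE (r + 1))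
    (TGaux.unif (E \ {e}) r) (TGaux.unif_isContractionBy he r)
  rw [show (TGaux.unif E (r + 1)).E \ {e} = D from rfl,
    TGaux.unif_restrict D Set.diff_subset (r + 1), ← hmap (r + 1)] at hdc'
  have hzero : f (TGaux.unif D r) = 0 := by
    have := hdc'.symm
    rwa [add_eq_left] at this
  rw [TGaux.eq_unif U E r hUE hUfin hUC, hmap r, hzero]
end
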